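/- Under the standing assumptions (X Banach, Y Hilbert, A : X → Y bounded linear, R proper, lower semicontinuous, c₀-strongly convex, Ax = y solvable in dom(R), y₁, y₂, … i.i.d. Y-valued with E[y₁] = y and 0 < σ² := E[‖y₁−y‖²] < ∞, ȳ⁽ⁿ⁾ := (1/n)∑_{i=1}^n yᵢ), let {x_t, λ_t} be the dual gradient iterates with exact data y and {x_t⁽ⁿ⁾, λ_t⁽ⁿ⁾} the iterates with data ȳ⁽ⁿ⁾, both started from λ₀ = λ₀⁽ⁿ⁾ = 0 with the same step size γ > 0. Then for every fixed integer t ≥ 0, E[‖x_t⁽ⁿ⁾ − x_t‖²] → 0 and E[‖λ_t⁽ⁿ⁾ − λ_t‖²] → 0 as n → ∞. -/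

import Mathlib

open MeasureTheory ProbabilityTheory Filter Topology
open scoped RealInnerProductSpace ENNReal BigOperators

/-- The sample mean `ȳ⁽ⁿ⁾ = (1/n) ∑_{i<n} yᵢ` of the first `n` measurements. -/
noncomputable def sampleMean {Y Ω : Type*} [NormedAddCommGroup Y] [NormedSpace ℝ Y]
    (ys : ℕ → Ω → Y) (n : ℕ) (ω : Ω) : Y :=
  (n : ℝ)⁻¹ • ∑ i ∈ Finset.range n, ys i ω


lemma dg_stab {X Y : Type*} [NormedAddCommGroup X] [NormedSpace ℝ X]
    [NormedAddCommGroup Y] [InnerProductSpace ℝ Y]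
    (A : X →L[ℝ] Y) (R : X → ℝ≥0∞) (c₀ : ℝ) (hc₀ : 0 < c₀)
    (hsconv : ∀ u v : X, R u ≠ ⊤ → R v ≠ ⊤ → ∀ s : ℝ, 0 ≤ s → s ≤ 1 →
      R (s • u + (1 - s) • v) + ENNReal.ofReal (c₀ * s * (1 - s) * ‖u - v‖ ^ 2)
        ≤ ENNReal.ofReal s * R u + ENNReal.ofReal (1 - s) * R v)
    (u v : X) (l l' : Y) (hu : R u ≠ ⊤) (hv : R v ≠ ⊤)
    (hminu : ∀ z : X, ENNReal.ofReal ((R u).toReal - ⟪l, A u⟫ + ⟪l, A z⟫) ≤ R z)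
    (hminv : ∀ z : X, ENNReal.ofReal ((R v).toReal - ⟪l', A v⟫ + ⟪l', A z⟫) ≤ R z) :
    ‖u - v‖ ≤ ‖A‖ / c₀ * ‖l - l'‖ := by
  set m : X := (1/2 : ℝ) • u + (1 - 1/2 : ℝ) • v with hm
  have hsc := hsconv u v hu hv (1/2) (by norm_num) (by norm_num)
  have hRHS : ENNReal.ofReal (1/2) * R u + ENNReal.ofReal (1 - 1/2 : ℝ) * R v ≠ ⊤ := by
    simp [ENNReal.add_ne_top, ENNReal.mul_ne_top, hu, hv, ENNReal.ofReal_ne_top]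
  have hmne : R m ≠ ⊤ := ne_top_of_le_ne_top hRHS (le_trans le_self_add hsc)
  have hcnn : 0 ≤ c₀ * (1/2) * (1 - 1/2) * ‖u - v‖ ^ 2 := by
    have := sq_nonneg ‖u - v‖; nlinarith
  have h1 : (R u).toReal - ⟪l, A u⟫ + ⟪l, A m⟫ ≤ (R m).toReal := by
    have := hminu m; rwa [ENNReal.ofReal_le_iff_le_toReal hmne] at this
  have h2 : (R v).toReal - ⟪l', A v⟫ + ⟪l', A m⟫ ≤ (R m).toReal := by
    have := hminv m; rwa [ENNReal.ofReal_le_iff_le_toReal hmne] at this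
  have h3 : (R m).toReal + c₀ * (1/2) * (1 - 1/2) * ‖u - v‖ ^ 2
      ≤ (1/2) * (R u).toReal + (1 - 1/2) * (R v).toReal := by
    have h := ENNReal.toReal_mono hRHS hsc
    rw [ENNReal.toReal_add hmne ENNReal.ofReal_ne_top,
      ENNReal.toReal_add (ENNReal.mul_ne_top ENNReal.ofReal_ne_top hu)
        (ENNReal.mul_ne_top ENNReal.ofReal_ne_top hv)] at h
    · rwa [ENNReal.toReal_mul, ENNReal.toReal_mul, ENNReal.toReal_ofReal hcnn,
        ENNReal.toReal_ofReal (by norm_num), ENNReal.toReal_ofReal (by norm_num)] at h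
  have hAm : A m = (1/2 : ℝ) • A u + (1 - 1/2 : ℝ) • A v := by
    rw [hm]; simp [map_add, _root_.map_smul]
  have him : ⟪l, A m⟫ = (1/2) * ⟪l, A u⟫ + (1 - 1/2) * ⟪l, A v⟫ := by
    rw [hAm, inner_add_right, real_inner_smul_right, real_inner_smul_right]
  have him' : ⟪l', A m⟫ = (1/2) * ⟪l', A u⟫ + (1 - 1/2) * ⟪l', A v⟫ := by
    rw [hAm, inner_add_right, real_inner_smul_right, real_inner_smul_right]
  have hkey : c₀ * ‖u - v‖ ^ 2 ≤ ⟪l - l', A u - A v⟫ := by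
    have hexp : ⟪l - l', A u - A v⟫
        = ⟪l, A u⟫ - ⟪l, A v⟫ - ⟪l', A u⟫ + ⟪l', A v⟫ := by
      rw [inner_sub_left, inner_sub_right, inner_sub_right]; ring
    rw [hexp]; rw [him] at h1; rw [him'] at h2; linarith
  have hub : ⟪l - l', A u - A v⟫ ≤ ‖l - l'‖ * (‖A‖ * ‖u - v‖) := by
    calc ⟪l - l', A u - A v⟫ ≤ ‖l - l'‖ * ‖A u - A v‖ := real_inner_le_norm _ _
      _ ≤ ‖l - l'‖ * (‖A‖ * ‖u - v‖) := by
          rw [← map_sub]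
          exact mul_le_mul_of_nonneg_left (A.le_opNorm _) (norm_nonneg _)
  rcases eq_or_lt_of_le (norm_nonneg (u - v)) with h0 | h0
  · rw [← h0]; positivity
  · have hc : c₀ * ‖u - v‖ ^ 2 ≤ ‖l - l'‖ * (‖A‖ * ‖u - v‖) := le_trans hkey hub
    rw [div_mul_eq_mul_div, le_div_iff₀ hc₀]
    nlinarith

/-- Lemma 3.4: for every fixed `t`, the dual gradient iterates `(x_t⁽ⁿ⁾, λ_t⁽ⁿ⁾)` computed
from the averaged data `ȳ⁽ⁿ⁾` converge in mean square, as `n → ∞`, to the iterates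
`(x_t, λ_t)` computed from the exact data `y`. -/
theorem dual_gradient_iterates_converge_to_exact
    {X Y : Type*} [NormedAddCommGroup X] [NormedSpace ℝ X] [CompleteSpace X]
    [NormedAddCommGroup Y] [InnerProductSpace ℝ Y] [CompleteSpace Y]
    [MeasurableSpace Y] [BorelSpace Y]
    {Ω : Type*} [MeasurableSpace Ω] (μ : Measure Ω) [IsProbabilityMeasure μ]
    (A : X →L[ℝ] Y) (R : X → ℝ≥0∞) (c₀ : ℝ) (hc₀ : 0 < c₀)
    (hproper : ∃ u : X, R u ≠ ⊤)
    (hlsc : LowerSemicontinuous R)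
    (hsconv : ∀ u v : X, R u ≠ ⊤ → R v ≠ ⊤ → ∀ s : ℝ, 0 ≤ s → s ≤ 1 →
      R (s • u + (1 - s) • v) + ENNReal.ofReal (c₀ * s * (1 - s) * ‖u - v‖ ^ 2)
        ≤ ENNReal.ofReal s * R u + ENNReal.ofReal (1 - s) * R v)
    (y : Y) (xdag : X) (hxdag_sol : A xdag = y) (hxdag_dom : R xdag ≠ ⊤)
    (hxdag_min : ∀ z : X, A z = y → R xdag ≤ R z)
    -- the i.i.d. data
    (ys : ℕ → Ω → Y) (σ2 : ℝ)
    (hmeas : ∀ i, Measurable (ys i))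
    (hindep : iIndepFun ys μ)
    (hident : ∀ i, IdentDistrib (ys i) (ys 0) μ μ)
    (hint1 : Integrable (ys 0) μ)
    (hmean : ∫ ω, ys 0 ω ∂μ = y)
    (hint2 : Integrable (fun ω => ‖ys 0 ω - y‖ ^ 2) μ)
    (hσ2 : σ2 = ∫ ω, ‖ys 0 ω - y‖ ^ 2 ∂μ) (hσ2pos : 0 < σ2)
    -- the step size
    (γ : ℝ) (hγ0 : 0 < γ)
    -- the dual gradient iterates with exact data y
    (x : ℕ → X) (lam : ℕ → Y)
    (hlam0 : lam 0 = 0)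
    (hmin : ∀ t : ℕ, R (x t) ≠ ⊤ ∧ ∀ z : X,
      ENNReal.ofReal ((R (x t)).toReal - ⟪lam t, A (x t)⟫ + ⟪lam t, A z⟫) ≤ R z)
    (hupd : ∀ t : ℕ, lam (t + 1) = lam t - γ • (A (x t) - y))
    -- the dual gradient iterates with averaged data ȳ⁽ⁿ⁾
    (xs : ℕ → ℕ → Ω → X) (lams : ℕ → ℕ → Ω → Y)
    (hlams0 : ∀ n ω, lams n 0 ω = 0)
    (hmins : ∀ n t ω, R (xs n t ω) ≠ ⊤ ∧ ∀ z : X,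
      ENNReal.ofReal ((R (xs n t ω)).toReal - ⟪lams n t ω, A (xs n t ω)⟫
        + ⟪lams n t ω, A z⟫) ≤ R z)
    (hupds : ∀ n t ω, lams n (t + 1) ω
      = lams n t ω - γ • (A (xs n t ω) - sampleMean ys n ω)) :
    ∀ t : ℕ,
      Tendsto (fun n : ℕ => ∫ ω, ‖xs n t ω - x t‖ ^ 2 ∂μ) atTop (𝓝 0)
        ∧ Tendsto (fun n : ℕ => ∫ ω, ‖lams n t ω - lam t‖ ^ 2 ∂μ) atTop (𝓝 0) := by
  -- operator norm constant
  set K : ℝ := ‖A‖ / c₀ with hK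
  have hK0 : 0 ≤ K := by positivity
  -- pointwise stability of the primal step
  have hxb : ∀ n t ω, ‖xs n t ω - x t‖ ≤ K * ‖lams n t ω - lam t‖ := fun n t ω =>
    dg_stab A R c₀ hc₀ hsconv (xs n t ω) (x t) (lams n t ω) (lam t)
      (hmins n t ω).1 (hmin t).1 (hmins n t ω).2 (hmin t).2
  -- pointwise bound on the dual iterates by the data error
  have hlamb : ∀ t : ℕ, ∃ C : ℝ, 0 ≤ C ∧ ∀ n ω,
      ‖lams n t ω - lam t‖ ≤ C * ‖sampleMean ys n ω - y‖ := by
    intro t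
    induction t with
    | zero =>
        exact ⟨0, le_refl 0, fun n ω => by simp [hlams0 n ω, hlam0]⟩
    | succ t ih =>
        obtain ⟨C, hC0, hC⟩ := ih
        refine ⟨C * (1 + γ * ‖A‖ * K) + γ, by positivity, fun n ω => ?_⟩
        have hdiff : lams n (t + 1) ω - lam (t + 1)
            = (lams n t ω - lam t) - γ • (A (xs n t ω) - A (x t))
              + γ • (sampleMean ys n ω - y) := by
          rw [hupds n t ω, hupd t]; module
        rw [hdiff]
        have e1 : ‖γ • (A (xs n t ω) - A (x t))‖
            ≤ γ * (‖A‖ * (K * (C * ‖sampleMean ys n ω - y‖))) := by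
          rw [norm_smul, Real.norm_eq_abs, abs_of_pos hγ0, ← map_sub]
          refine mul_le_mul_of_nonneg_left ?_ hγ0.le
          calc ‖A (xs n t ω - x t)‖ ≤ ‖A‖ * ‖xs n t ω - x t‖ := A.le_opNorm _
            _ ≤ ‖A‖ * (K * (C * ‖sampleMean ys n ω - y‖)) := by
                refine mul_le_mul_of_nonneg_left ?_ (norm_nonneg A)
                exact le_trans (hxb n t ω)
                  (mul_le_mul_of_nonneg_left (hC n ω) hK0)
        have e2 : ‖γ • (sampleMean ys n ω - y)‖ = γ * ‖sampleMean ys n ω - y‖ := by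
          rw [norm_smul, Real.norm_eq_abs, abs_of_pos hγ0]
        calc ‖(lams n t ω - lam t) - γ • (A (xs n t ω) - A (x t))
              + γ • (sampleMean ys n ω - y)‖
            ≤ ‖(lams n t ω - lam t) - γ • (A (xs n t ω) - A (x t))‖
              + ‖γ • (sampleMean ys n ω - y)‖ := norm_add_le _ _
          _ ≤ ‖lams n t ω - lam t‖ + ‖γ • (A (xs n t ω) - A (x t))‖
              + ‖γ • (sampleMean ys n ω - y)‖ := by
              have := norm_sub_le (lams n t ω - lam t) (γ • (A (xs n t ω) - A (x t)))
              linarith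
          _ ≤ (C * (1 + γ * ‖A‖ * K) + γ) * ‖sampleMean ys n ω - y‖ := by
              have h1 := hC n ω
              rw [e2]
              nlinarith [norm_nonneg (sampleMean ys n ω - y), e1]
  -- L² theory of the data error
  have hmY2 : MemLp (ys 0) 2 μ := by
    have hsm : AEStronglyMeasurable (fun ω => ys 0 ω - y) μ :=
      hint1.1.sub aestronglyMeasurable_const
    have h2 : MemLp (fun ω => ys 0 ω - y) 2 μ :=
      (memLp_two_iff_integrable_sq_norm hsm).2 hint2
    have hadd := h2.add (memLp_const (p := 2) (μ := μ) y)
    have heq : ys 0 = (fun ω => ys 0 ω - y) + fun _ => y := by funext ω; simp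
    rw [heq]; exact hadd
  have hmY2i : ∀ i, MemLp (ys i) 2 μ := fun i => (hident i).memLp_iff.2 hmY2
  have hmE : ∀ n, MemLp (fun ω => sampleMean ys n ω - y) 2 μ := by
    intro n
    have hsum : MemLp (fun ω => ∑ i ∈ Finset.range n, ys i ω) 2 μ := by
      have hs := memLp_finset_sum' (μ := μ) (p := 2) (Finset.range n)
        (fun i _ => hmY2i i)
      have heq : (fun ω => ∑ i ∈ Finset.range n, ys i ω)
          = ∑ i ∈ Finset.range n, ys i := by funext ω; simp
      rw [heq]; exact hs
    have := (hsum.const_smul ((n : ℝ)⁻¹)).sub (memLp_const (p := 2) (μ := μ) y)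
    exact this
  have hintE : ∀ n, Integrable (fun ω => ‖sampleMean ys n ω - y‖ ^ 2) μ := fun n =>
    (memLp_two_iff_integrable_sq_norm (hmE n).1).1 (hmE n)
  -- the mean-square data error tends to zero (Lᵖ law of large numbers)
  have hg0 : Tendsto (fun n => ∫ ω, ‖sampleMean ys n ω - y‖ ^ 2 ∂μ) atTop (𝓝 0) := by
    have hSL := strong_law_Lp (μ := μ) (p := 2) (by norm_num) ENNReal.ofNat_ne_top ys hmY2
      (fun i j hij => hindep.indepFun hij) hident
    have key : ∀ n, ∫ ω, ‖sampleMean ys n ω - y‖ ^ 2 ∂μ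
        = ((eLpNorm (fun ω => sampleMean ys n ω - y) 2 μ).toReal) ^ 2 := by
      intro n
      set f : Ω → Y := fun ω => sampleMean ys n ω - y with hfdef
      have h := (hmE n).eLpNorm_eq_integral_rpow_norm two_ne_zero ENNReal.ofNat_ne_top
      have hI : 0 ≤ ∫ ω, ‖f ω‖ ^ (2 : ℝ≥0∞).toReal ∂μ :=
        integral_nonneg fun ω => Real.rpow_nonneg (norm_nonneg _) _
      rw [h, ENNReal.toReal_ofReal (Real.rpow_nonneg hI _),
        ← Real.rpow_natCast ((∫ ω, ‖f ω‖ ^ (2 : ℝ≥0∞).toReal ∂μ)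
          ^ ((2 : ℝ≥0∞).toReal)⁻¹) 2, ← Real.rpow_mul hI]
      have hexp : ∀ ω : Ω, ‖f ω‖ ^ (2 : ℝ≥0∞).toReal = ‖f ω‖ ^ 2 := fun ω => by
        rw [ENNReal.toReal_ofNat, show (2 : ℝ) = ((2 : ℕ) : ℝ) by norm_num,
          Real.rpow_natCast]
      simp only [hexp]
      norm_num
      rfl
    have hSL' : Tendsto (fun n => eLpNorm (fun ω => sampleMean ys n ω - y) 2 μ)
        atTop (𝓝 0) := by
      simpa [sampleMean, hmean] using hSL
    have htr : Tendsto
        (fun n => (eLpNorm (fun ω => sampleMean ys n ω - y) 2 μ).toReal)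
        atTop (𝓝 0) := by
      have := (ENNReal.tendsto_toReal (ENNReal.zero_ne_top)).comp hSL'
      exact this
    have h2 := htr.pow 2
    simp only [ne_eq, OfNat.ofNat_ne_zero, not_false_eq_true, zero_pow] at h2
    exact Tendsto.congr (fun n => (key n).symm) h2
  -- conclusion
  intro t
  obtain ⟨C, hC0, hC⟩ := hlamb t
  have hxq : ∀ n ω, ‖xs n t ω - x t‖ ^ 2
      ≤ (K * C) ^ 2 * ‖sampleMean ys n ω - y‖ ^ 2 := by
    intro n ω
    have h1 : ‖xs n t ω - x t‖ ≤ (K * C) * ‖sampleMean ys n ω - y‖ := by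
      calc ‖xs n t ω - x t‖ ≤ K * ‖lams n t ω - lam t‖ := hxb n t ω
        _ ≤ K * (C * ‖sampleMean ys n ω - y‖) :=
            mul_le_mul_of_nonneg_left (hC n ω) hK0
        _ = (K * C) * ‖sampleMean ys n ω - y‖ := by ring
    calc ‖xs n t ω - x t‖ ^ 2 ≤ ((K * C) * ‖sampleMean ys n ω - y‖) ^ 2 :=
          pow_le_pow_left₀ (norm_nonneg _) h1 2
      _ = (K * C) ^ 2 * ‖sampleMean ys n ω - y‖ ^ 2 := by ring
  have hlq : ∀ n ω, ‖lams n t ω - lam t‖ ^ 2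
      ≤ C ^ 2 * ‖sampleMean ys n ω - y‖ ^ 2 := by
    intro n ω
    calc ‖lams n t ω - lam t‖ ^ 2 ≤ (C * ‖sampleMean ys n ω - y‖) ^ 2 :=
          pow_le_pow_left₀ (norm_nonneg _) (hC n ω) 2
      _ = C ^ 2 * ‖sampleMean ys n ω - y‖ ^ 2 := by ring
  constructor
  · refine squeeze_zero (fun n => integral_nonneg fun ω => sq_nonneg _)
      (fun n => ?_) (by simpa using hg0.const_mul ((K * C) ^ 2))
    calc ∫ ω, ‖xs n t ω - x t‖ ^ 2 ∂μ
        ≤ ∫ ω, (K * C) ^ 2 * ‖sampleMean ys n ω - y‖ ^ 2 ∂μ :=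
          integral_mono_of_nonneg (Filter.Eventually.of_forall fun ω => sq_nonneg _)
            ((hintE n).const_mul _) (Filter.Eventually.of_forall fun ω => hxq n ω)
      _ = (K * C) ^ 2 * ∫ ω, ‖sampleMean ys n ω - y‖ ^ 2 ∂μ := integral_const_mul _ _
  · refine squeeze_zero (fun n => integral_nonneg fun ω => sq_nonneg _)
      (fun n => ?_) (by simpa using hg0.const_mul (C ^ 2))
    calc ∫ ω, ‖lams n t ω - lam t‖ ^ 2 ∂μ
        ≤ ∫ ω, C ^ 2 * ‖sampleMean ys n ω - y‖ ^ 2 ∂μ :=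
          integral_mono_of_nonneg (Filter.Eventually.of_forall fun ω => sq_nonneg _)
            ((hintE n).const_mul _) (Filter.Eventually.of_forall fun ω => hlq n ω)
      _ = C ^ 2 * ∫ ω, ‖sampleMean ys n ω - y‖ ^ 2 ∂μ := integral_const_mul _ _
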